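/- Let A ⊆ B(F) and B ⊆ B(G) be von Neumann algebras, H a complex Hilbert space, ρ : A → B(H) a unital *-homomorphism, ξ ∈ B(G,H) an isometry with S(a) := ξ* ρ(a) ξ ∈ B for all a ∈ A, and f ∈ F, g ∈ G unit vectors with ⟨f, a f⟩ = ⟨g, S(a) g⟩ for all a ∈ A and f cyclic for A; let ξ' : F → H be the unique isometry with ξ'(a f) = ρ(a) ξ g. Suppose additionally ρ' : B' → B(H) is a unital *-homomorphism whose range commutes with ρ(A) and which satisfies ρ'(b') ξ = ξ b' for all b' ∈ B'. Then S'(b') := ξ'* ρ'(b') ξ' defines a unital completely positive map from B' into B(F) whose values lie in the commutant A', and it satisfies φ_g(b' S(a)) = φ_f(S'(b') a) for all a ∈ A and b' ∈ B' (in particular φ_f ∘ S' = φ_g). Moreover S' is normal whenever ρ' is normal. -/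

import Mathlib

/-!
Statement 14: the compression `S'(b') := ξ'* ρ'(b') ξ'` of a commuting unital
∗-representation `ρ'` of `B'` is a unital completely positive map `B' → A'` in duality
with `S`, and it is normal whenever `ρ'` is normal.
-/

open scoped InnerProductSpace ComplexOrder
open Filter ContinuousLinearMap

noncomputable section

universe u

section Defs

variable {X Y : Type u}
  [NormedAddCommGroup X] [InnerProductSpace ℂ X] [CompleteSpace X]
  [NormedAddCommGroup Y] [InnerProductSpace ℂ Y] [CompleteSpace Y]

/-- `S` is (complex-)linear on the subset `A`. -/
def LinearOn (A : Set (X →L[ℂ] X)) (S : (X →L[ℂ] X) → (Y →L[ℂ] Y)) : Prop :=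
  (∀ a₁ ∈ A, ∀ a₂ ∈ A, S (a₁ + a₂) = S a₁ + S a₂) ∧
    ∀ (c : ℂ), ∀ a ∈ A, S (c • a) = c • S a

/-- `S` is completely positive on `A`: for all `n`, `x : Fin n → A` and vectors
`v : Fin n → Y` the matrix-positivity expression `∑ ⟪v i, S (x i ∗ x j) (v j)⟫ ≥ 0` holds.
(This is the standard equivalent form of positivity of the entrywise applied maps on
`n × n` operator matrices.) -/
def CompletelyPositiveOn (A : Set (X →L[ℂ] X)) (S : (X →L[ℂ] X) → (Y →L[ℂ] Y)) : Prop :=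
  ∀ (n : ℕ) (x : Fin n → (X →L[ℂ] X)), (∀ i, x i ∈ A) → ∀ v : Fin n → Y,
    0 ≤ ∑ i, ∑ j, ⟪v i, (S (star (x i) * x j)) (v j)⟫_ℂ

/-- `S` is normal on `A`: the restriction of `S` to the closed unit ball of `A` is
continuous with respect to the weak operator topologies (net/filter formulation). -/
def NormalOn (A : Set (X →L[ℂ] X)) (S : (X →L[ℂ] X) → (Y →L[ℂ] Y)) : Prop :=
  ∀ (l : Filter (X →L[ℂ] X)), ∀ a ∈ A,
    (∀ᶠ x in l, x ∈ A ∧ ‖x‖ ≤ 1) →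
    (∀ x₁ x₂ : X, Tendsto (fun y => ⟪x₁, y x₂⟫_ℂ) l (nhds ⟪x₁, a x₂⟫_ℂ)) →
    ∀ y₁ y₂ : Y, Tendsto (fun y => ⟪y₁, (S y) y₂⟫_ℂ) l (nhds ⟪y₁, (S a) y₂⟫_ℂ)

/-- `j` is a ∗-homomorphism on `A`. -/
def StarHomOn (A : Set (X →L[ℂ] X)) (j : (X →L[ℂ] X) → (Y →L[ℂ] Y)) : Prop :=
  LinearOn A j ∧ (∀ a₁ ∈ A, ∀ a₂ ∈ A, j (a₁ * a₂) = j a₁ * j a₂) ∧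
    ∀ a ∈ A, j (star a) = star (j a)

end Defs


/-- `f` is a cyclic vector for the set of operators `A`: `{a f : a ∈ A}` is dense. -/
def CyclicVector {X : Type u} [NormedAddCommGroup X] [InnerProductSpace ℂ X]
    [CompleteSpace X] (A : Set (X →L[ℂ] X)) (f : X) : Prop :=
  Dense {v : X | ∃ a ∈ A, a f = v}

/-- **The compression `S' = ξ'* ρ'(·) ξ'` is the dual map of `S`.**
In the situation of the previous statement, let `ξ' : F → H` be the unique isometry with
`ξ'(a f) = ρ(a) ξ g`, and let `ρ' : B' → B(H)` be a unital ∗-homomorphism whose range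
commutes with `ρ(A)` and with `ρ'(b') ξ = ξ b'` for all `b' ∈ B'`.  Then
`S'(b') := ξ'* ρ'(b') ξ'` is a unital completely positive map `B' → B(F)` with values in
the commutant `A'`, satisfying `φ_g(b' S(a)) = φ_f(S'(b') a)` (in particular
`φ_f ∘ S' = φ_g`), and `S'` is normal whenever `ρ'` is normal. -/
theorem compression_is_dual_map
    {F G H : Type u}
    [NormedAddCommGroup F] [InnerProductSpace ℂ F] [CompleteSpace F]
    [NormedAddCommGroup G] [InnerProductSpace ℂ G] [CompleteSpace G]
    [NormedAddCommGroup H] [InnerProductSpace ℂ H] [CompleteSpace H]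
    (A : VonNeumannAlgebra F) (B : VonNeumannAlgebra G)
    (ρ : (F →L[ℂ] F) → (H →L[ℂ] H))
    (hρhom : StarHomOn (A : Set (F →L[ℂ] F)) ρ)
    (hρunital : ρ 1 = 1)
    (ξ : G →L[ℂ] H)
    (hξiso : (ContinuousLinearMap.adjoint ξ) ∘L ξ = 1)
    (hS : ∀ a ∈ A, (ContinuousLinearMap.adjoint ξ) ∘L (ρ a ∘L ξ) ∈ B)
    (f : F) (g : G) (hf : ‖f‖ = 1) (hg : ‖g‖ = 1)
    (hcov : ∀ a ∈ A, ⟪f, a f⟫_ℂ =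
      ⟪g, ((ContinuousLinearMap.adjoint ξ) ∘L (ρ a ∘L ξ)) g⟫_ℂ)
    (hfcyc : CyclicVector (A : Set (F →L[ℂ] F)) f)
    (ξ' : F →L[ℂ] H)
    (hξ'iso : (ContinuousLinearMap.adjoint ξ') ∘L ξ' = 1)
    (hξ'val : ∀ a ∈ A, ξ' (a f) = ρ a (ξ g))
    (ρ' : (G →L[ℂ] G) → (H →L[ℂ] H))
    (hρ'hom : StarHomOn ((B.commutant : VonNeumannAlgebra G) : Set (G →L[ℂ] G)) ρ')
    (hρ'unital : ρ' 1 = 1)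
    (hcomm : ∀ a ∈ A, ∀ b' ∈ B.commutant, Commute (ρ a) (ρ' b'))
    (hintertwine : ∀ b' ∈ B.commutant, (ρ' b') ∘L ξ = ξ ∘L b') :
    ((ContinuousLinearMap.adjoint ξ') ∘L (ρ' 1 ∘L ξ') = 1) ∧
    LinearOn ((B.commutant : VonNeumannAlgebra G) : Set (G →L[ℂ] G))
      (fun b' => (ContinuousLinearMap.adjoint ξ') ∘L (ρ' b' ∘L ξ')) ∧
    CompletelyPositiveOn ((B.commutant : VonNeumannAlgebra G) : Set (G →L[ℂ] G))
      (fun b' => (ContinuousLinearMap.adjoint ξ') ∘L (ρ' b' ∘L ξ')) ∧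
    (∀ b' ∈ B.commutant,
      (ContinuousLinearMap.adjoint ξ') ∘L (ρ' b' ∘L ξ') ∈ A.commutant) ∧
    (∀ a ∈ A, ∀ b' ∈ B.commutant,
      ⟪g, b' (((ContinuousLinearMap.adjoint ξ) ∘L (ρ a ∘L ξ)) g)⟫_ℂ =
        ⟪f, ((ContinuousLinearMap.adjoint ξ') ∘L (ρ' b' ∘L ξ')) (a f)⟫_ℂ) ∧
    (∀ b' ∈ B.commutant,
      ⟪f, ((ContinuousLinearMap.adjoint ξ') ∘L (ρ' b' ∘L ξ')) f⟫_ℂ = ⟪g, b' g⟫_ℂ) ∧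
    (NormalOn ((B.commutant : VonNeumannAlgebra G) : Set (G →L[ℂ] G)) ρ' →
      NormalOn ((B.commutant : VonNeumannAlgebra G) : Set (G →L[ℂ] G))
        (fun b' => (ContinuousLinearMap.adjoint ξ') ∘L (ρ' b' ∘L ξ'))) := by
  classical
  -- basic facts
  have hdense : Dense (Submodule.span ℂ {v : F | ∃ a ∈ A, a f = v} : Set F) :=
    hfcyc.mono Submodule.subset_span
  have hξ'f : ξ' f = ξ g := by
    have h := hξ'val 1 (one_mem A)
    simpa [hρunital] using h
  have hint2 : ∀ a ∈ A, ξ' ∘L a = ρ a ∘L ξ' := by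
    intro a ha
    apply ContinuousLinearMap.ext_on hdense
    rintro v ⟨a₁, ha₁, rfl⟩
    simp only [ContinuousLinearMap.comp_apply]
    rw [← ContinuousLinearMap.mul_apply a a₁, hξ'val _ (mul_mem ha ha₁),
      hρhom.2.1 a ha a₁ ha₁, ContinuousLinearMap.mul_apply, hξ'val a₁ ha₁]
  have hadjρ : ∀ a ∈ A, ContinuousLinearMap.adjoint (ρ a) = ρ (star a) := by
    intro a ha
    rw [hρhom.2.2 a ha, ContinuousLinearMap.star_eq_adjoint]
  have hint2' : ∀ a ∈ A, a ∘L ContinuousLinearMap.adjoint ξ'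
      = ContinuousLinearMap.adjoint ξ' ∘L ρ a := by
    intro a ha
    have h := congrArg ContinuousLinearMap.adjoint (hint2 (star a) (star_mem ha))
    rw [ContinuousLinearMap.adjoint_comp, ContinuousLinearMap.adjoint_comp,
      hadjρ (star a) (star_mem ha), star_star] at h
    have hsa : ContinuousLinearMap.adjoint (star a) = a := by
      rw [ContinuousLinearMap.star_eq_adjoint, ContinuousLinearMap.adjoint_adjoint]
    rw [hsa] at h
    exact h
  refine ⟨?_, ⟨?_, ?_⟩, ?_, ?_, ?_, ?_, ?_⟩
  · rw [hρ'unital, ContinuousLinearMap.one_def, ContinuousLinearMap.id_comp]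
    simpa using hξ'iso
  · intro a₁ h₁ a₂ h₂
    ext v; simp [hρ'hom.1.1 a₁ h₁ a₂ h₂]
  · intro c a ha
    ext v; simp [hρ'hom.1.2 c a ha]
  · intro n x hx v
    have key : ∀ i j, ⟪v i, ((ContinuousLinearMap.adjoint ξ') ∘L
        (ρ' (star (x i) * x j) ∘L ξ')) (v j)⟫_ℂ
        = ⟪ρ' (x i) (ξ' (v i)), ρ' (x j) (ξ' (v j))⟫_ℂ := by
      intro i j
      have hmul : ρ' (star (x i) * x j) = ρ' (star (x i)) * ρ' (x j) :=
        hρ'hom.2.1 _ (star_mem (hx i)) _ (hx j)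
      have hst : ρ' (star (x i)) = star (ρ' (x i)) := hρ'hom.2.2 _ (hx i)
      simp only [ContinuousLinearMap.comp_apply, ContinuousLinearMap.adjoint_inner_right]
      rw [hmul, hst, ContinuousLinearMap.mul_apply, ContinuousLinearMap.star_eq_adjoint,
        ContinuousLinearMap.adjoint_inner_right]
    calc (0 : ℂ) ≤ ⟪∑ i, ρ' (x i) (ξ' (v i)), ∑ j, ρ' (x j) (ξ' (v j))⟫_ℂ := by
            rw [inner_self_eq_norm_sq_to_K]
            norm_cast
            exact Complex.zero_le_real.mpr (sq_nonneg _)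
      _ = ∑ i, ∑ j, ⟪v i, ((ContinuousLinearMap.adjoint ξ') ∘L
            (ρ' (star (x i) * x j) ∘L ξ')) (v j)⟫_ℂ := by
            rw [sum_inner]
            exact Finset.sum_congr rfl fun i _ => by
              rw [inner_sum]
              exact Finset.sum_congr rfl fun j _ => (key i j).symm
  · intro b' hb'
    rw [VonNeumannAlgebra.mem_commutant_iff]
    intro a ha
    ext v
    have e1 := congrArg (fun T => T v) (hint2 a ha)
    have e2 := congrArg (fun T => T (ρ' b' (ξ' v))) (hint2' a ha)
    have e3 := congrArg (fun T => T (ξ' v)) ((hcomm a ha b' hb').symm.eq)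
    simp only [ContinuousLinearMap.comp_apply, ContinuousLinearMap.mul_apply] at e1 e2 e3 ⊢
    rw [e1, e3, ← e2]
  · intro a ha b' hb'
    have hcommute : b' * ((ContinuousLinearMap.adjoint ξ) ∘L (ρ a ∘L ξ))
        = ((ContinuousLinearMap.adjoint ξ) ∘L (ρ a ∘L ξ)) * b' :=
      (VonNeumannAlgebra.mem_commutant_iff.mp hb' _ (hS a ha)).symm
    have e3 := congrArg (fun T => T (ξ g)) (hcomm a ha b' hb').symm.eq
    have e4 := congrArg (fun T => T g) (hintertwine b' hb')
    simp only [ContinuousLinearMap.comp_apply, ContinuousLinearMap.mul_apply] at e3 e4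
    calc ⟪g, b' (((ContinuousLinearMap.adjoint ξ) ∘L (ρ a ∘L ξ)) g)⟫_ℂ
        = ⟪g, (b' * ((ContinuousLinearMap.adjoint ξ) ∘L (ρ a ∘L ξ))) g⟫_ℂ := rfl
      _ = ⟪g, ((ContinuousLinearMap.adjoint ξ) ∘L (ρ a ∘L ξ)) (b' g)⟫_ℂ := by
            rw [hcommute]; rfl
      _ = ⟪ξ g, ρ a (ξ (b' g))⟫_ℂ := by
            simp [ContinuousLinearMap.adjoint_inner_right]
      _ = ⟪ξ g, ρ a (ρ' b' (ξ g))⟫_ℂ := by rw [e4]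
      _ = ⟪ξ g, ρ' b' (ρ a (ξ g))⟫_ℂ := by rw [e3]
      _ = ⟪f, ((ContinuousLinearMap.adjoint ξ') ∘L (ρ' b' ∘L ξ')) (a f)⟫_ℂ := by
            simp [ContinuousLinearMap.adjoint_inner_right, hξ'val a ha, hξ'f]
  · intro b' hb'
    have e4 := congrArg (fun T => T g) (hintertwine b' hb')
    have e5 := congrArg (fun T => T (b' g)) hξiso
    simp only [ContinuousLinearMap.comp_apply, ContinuousLinearMap.one_apply] at e4 e5
    calc ⟪f, ((ContinuousLinearMap.adjoint ξ') ∘L (ρ' b' ∘L ξ')) f⟫_ℂ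
        = ⟪ξ' f, ρ' b' (ξ' f)⟫_ℂ := by
            simp [ContinuousLinearMap.adjoint_inner_right]
      _ = ⟪ξ g, ξ (b' g)⟫_ℂ := by rw [hξ'f, e4]
      _ = ⟪g, (ContinuousLinearMap.adjoint ξ) (ξ (b' g))⟫_ℂ := by
            rw [ContinuousLinearMap.adjoint_inner_right]
      _ = ⟪g, b' g⟫_ℂ := by rw [e5]
  · intro hnorm l a ha hev hwot y₁ y₂
    have h := hnorm l a ha hev hwot (ξ' y₁) (ξ' y₂)
    simpa [ContinuousLinearMap.comp_apply, ContinuousLinearMap.adjoint_inner_right] using h
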